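/- Let P_A, P_B be orthogonal projections onto subspaces U, V, and T = (I-P_B)(I-P_A). For any y, write y = u + w where u is the orthogonal projection of y onto U+V and w is orthogonal to U+V. Then T^k y = T^k u + w for all k, and ‖T^k y - w‖ = ‖T^k u‖ → 0 as k → ∞. -/

import Mathlib

open Submodule Filter Topology RealInnerProductSpace

noncomputable def proj {E : Type*} [NormedAddCommGroup E] [InnerProductSpace ℝ E]
    [FiniteDimensional ℝ E] (U : Submodule ℝ E) : E →ₗ[ℝ] E :=
  U.subtype ∘ₗ (orthogonalProjection U).toLinearMap

section aux
open RealInnerProductSpace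

variable {E : Type*} [NormedAddCommGroup E] [InnerProductSpace ℝ E] [FiniteDimensional ℝ E]

lemma proj_mem (U : Submodule ℝ E) (x : E) : proj U x ∈ U := (orthogonalProjection U x).2

lemma sub_proj_mem_orthogonal (U : Submodule ℝ E) (x : E) : x - proj U x ∈ Uᗮ :=
  Submodule.sub_starProjection_mem_orthogonal (K := U) x

lemma proj_eq_zero (U : Submodule ℝ E) {x : E} (hx : x ∈ Uᗮ) : proj U x = 0 := by
  have : orthogonalProjection U x = 0 := orthogonalProjection_eq_zero_iff.2 hx
  simp [proj, this]

lemma norm_sq_split (U : Submodule ℝ E) (x : E) :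
    ‖x‖ ^ 2 = ‖proj U x‖ ^ 2 + ‖x - proj U x‖ ^ 2 := by
  have h : (inner ℝ (proj U x) (x - proj U x) : ℝ) = 0 :=
    (sub_proj_mem_orthogonal U x) (proj U x) (proj_mem U x)
  have := norm_add_sq_eq_norm_sq_add_norm_sq_real h
  simpa [sq] using this

lemma norm_sub_proj_le (U : Submodule ℝ E) (x : E) : ‖x - proj U x‖ ≤ ‖x‖ := by
  have h := norm_sq_split U x
  nlinarith [norm_nonneg (x - proj U x), norm_nonneg x, sq_nonneg ‖proj U x‖]

lemma norm_sub_proj_lt (U : Submodule ℝ E) {x : E} (hx : proj U x ≠ 0) :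
    ‖x - proj U x‖ < ‖x‖ := by
  have h := norm_sq_split U x
  have h2 : 0 < ‖proj U x‖ := norm_pos_iff.2 hx
  nlinarith [norm_nonneg (x - proj U x), norm_nonneg x]

end aux

theorem stmt10 {E : Type*} [NormedAddCommGroup E] [InnerProductSpace ℝ E] [FiniteDimensional ℝ E]
    (U V : Submodule ℝ E) (y u w : E)
    (hu : u = proj (U ⊔ V) y) (hw : w = y - u) :
    (∀ k : ℕ,
      ((((LinearMap.id - proj V) ∘ₗ (LinearMap.id - proj U) : Module.End ℝ E)) ^ k) y =
        ((((LinearMap.id - proj V) ∘ₗ (LinearMap.id - proj U) : Module.End ℝ E)) ^ k) u + w) ∧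
    Tendsto (fun k : ℕ =>
        ‖((((LinearMap.id - proj V) ∘ₗ (LinearMap.id - proj U) : Module.End ℝ E)) ^ k) y - w‖)
      atTop (𝓝 0) := by
  set T : Module.End ℝ E := ((LinearMap.id - proj V) ∘ₗ (LinearMap.id - proj U)) with hT
  set W : Submodule ℝ E := U ⊔ V with hWdef
  -- basic properties
  have hTapp : ∀ x : E, T x = (x - proj U x) - proj V (x - proj U x) := by
    intro x; simp [hT]
  have hUW : U ≤ W := le_sup_left
  have hVW : V ≤ W := le_sup_right
  -- w is orthogonal to W
  have hwmem : w ∈ Wᗮ := by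
    rw [hw, hu]
    exact sub_proj_mem_orthogonal W y
  have hwU : w ∈ Uᗮ := (Submodule.orthogonal_le hUW) hwmem
  have hwV : w ∈ Vᗮ := (Submodule.orthogonal_le hVW) hwmem
  have hTw : T w = w := by
    rw [hTapp, proj_eq_zero U hwU, sub_zero, proj_eq_zero V hwV, sub_zero]
  have hTkw : ∀ k : ℕ, (T ^ k) w = w := by
    intro k
    induction k with
    | zero => simp
    | succ n ih => rw [pow_succ, Module.End.mul_apply, hTw, ih]
  -- W is T-invariant
  have hTW : ∀ x ∈ W, T x ∈ W := by
    intro x hx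
    rw [hTapp]
    exact W.sub_mem (W.sub_mem hx (hUW (proj_mem U x))) (hVW (proj_mem V _))
  -- strict contraction on W
  have hlt : ∀ x ∈ W, x ≠ 0 → ‖T x‖ < ‖x‖ := by
    intro x hx hx0
    rw [hTapp]
    by_cases hPU : proj U x = 0
    · -- x ∈ Uᗮ ; then must have proj V x ≠ 0
      rw [hPU, sub_zero]
      have hxU : x ∈ Uᗮ := by
        have := sub_proj_mem_orthogonal U x
        rwa [hPU, sub_zero] at this
      by_cases hPV : proj V x = 0
      · exfalso
        have hxV : x ∈ Vᗮ := by
          have := sub_proj_mem_orthogonal V x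
          rwa [hPV, sub_zero] at this
        have hxW : x ∈ Wᗮ := by
          refine (Submodule.mem_orthogonal W x).2 ?_
          intro z hz
          rw [hWdef] at hz
          rcases Submodule.mem_sup.1 hz with ⟨a, ha, b, hb, rfl⟩
          have h1 : (inner ℝ a x : ℝ) = 0 := (Submodule.mem_orthogonal U x).1 hxU a ha
          have h2 : (inner ℝ b x : ℝ) = 0 := (Submodule.mem_orthogonal V x).1 hxV b hb
          rw [inner_add_left, h1, h2, add_zero]
        have : x ∈ (⊥ : Submodule ℝ E) := (W.orthogonal_disjoint).le_bot ⟨hx, hxW⟩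
        exact hx0 (Submodule.mem_bot ℝ |>.1 this)
      · exact norm_sub_proj_lt V hPV
    · calc ‖(x - proj U x) - proj V (x - proj U x)‖ ≤ ‖x - proj U x‖ :=
            norm_sub_proj_le V _
        _ < ‖x‖ := norm_sub_proj_lt U hPU
  -- extract a uniform contraction constant via compactness
  have hcont : ∃ c : ℝ, 0 ≤ c ∧ c < 1 ∧ ∀ x ∈ W, ‖T x‖ ≤ c * ‖x‖ := by
    by_cases hWbot : ∀ x ∈ W, x = (0 : E)
    · refine ⟨0, le_refl _, by norm_num, ?_⟩
      intro x hx
      rw [hWbot x hx]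
      simp
    · push_neg at hWbot
      obtain ⟨x₀, hx₀W, hx₀⟩ := hWbot
      -- work on the subtype W
      have hTcont : Continuous (T : E → E) := T.continuous_of_finiteDimensional
      set f : W → ℝ := fun x => ‖T (x : E)‖ with hf
      have hfc : Continuous f := (continuous_norm.comp (hTcont.comp continuous_subtype_val))
      have hsc : IsCompact (Metric.sphere (0 : W) 1) := isCompact_sphere 0 1
      have hsne : (Metric.sphere (0 : W) 1).Nonempty := by
        refine ⟨(‖x₀‖⁻¹ : ℝ) • ⟨x₀, hx₀W⟩, ?_⟩
        have h0 : ‖x₀‖ ≠ 0 := norm_ne_zero_iff.2 hx₀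
        simp only [Metric.mem_sphere, dist_zero_right, norm_smul, norm_inv, norm_norm]
        rw [show ‖(⟨x₀, hx₀W⟩ : W)‖ = ‖x₀‖ from rfl]
        field_simp
      obtain ⟨z, hzs, hzmax⟩ := hsc.exists_isMaxOn hsne (hfc.continuousOn)
      have hz1 : ‖(z : E)‖ = 1 := by
        have : ‖z‖ = 1 := by simpa using hzs
        simpa using this
      have hz0 : (z : E) ≠ 0 := by
        intro h; rw [h] at hz1; simp at hz1
      refine ⟨f z, norm_nonneg _, ?_, ?_⟩
      · have := hlt (z : E) z.2 hz0
        rw [hz1] at this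
        exact this
      · intro x hx
        by_cases hx0 : x = 0
        · simp [hx0, f]
        · have hnx : (0 : ℝ) < ‖x‖ := norm_pos_iff.2 hx0
          set x' : W := (‖x‖⁻¹ : ℝ) • ⟨x, hx⟩ with hx'
          have hx's : x' ∈ Metric.sphere (0 : W) 1 := by
            simp only [hx', Metric.mem_sphere, dist_zero_right, norm_smul, norm_inv, norm_norm]
            rw [show ‖(⟨x, hx⟩ : W)‖ = ‖x‖ from rfl]
            field_simp
          have hle : f x' ≤ f z := hzmax hx's
          have hfx' : f x' = ‖x‖⁻¹ * ‖T x‖ := by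
            simp only [f, hx']
            rw [show ((((‖x‖⁻¹ : ℝ) • (⟨x, hx⟩ : W)) : W) : E) = (‖x‖⁻¹ : ℝ) • x from rfl]
            rw [map_smul, norm_smul]
            simp
          rw [hfx'] at hle
          calc ‖T x‖ = ‖x‖ * (‖x‖⁻¹ * ‖T x‖) := by field_simp
            _ ≤ ‖x‖ * f z := by
                exact mul_le_mul_of_nonneg_left hle (le_of_lt hnx)
            _ = f z * ‖x‖ := by ring
  obtain ⟨c, hc0, hc1, hcle⟩ := hcont
  -- u ∈ W
  have huW : u ∈ W := by rw [hu]; exact proj_mem W y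
  -- iterate bounds
  have hTk : ∀ k : ℕ, (T ^ k) u ∈ W ∧ ‖(T ^ k) u‖ ≤ c ^ k * ‖u‖ := by
    intro k
    induction k with
    | zero => simpa using huW
    | succ n ih =>
      obtain ⟨ihW, ihn⟩ := ih
      constructor
      · rw [pow_succ', Module.End.mul_apply]
        exact hTW _ ihW
      · rw [pow_succ', Module.End.mul_apply]
        calc ‖T ((T ^ n) u)‖ ≤ c * ‖(T ^ n) u‖ := hcle _ ihW
          _ ≤ c * (c ^ n * ‖u‖) := mul_le_mul_of_nonneg_left ihn hc0
          _ = c ^ (n + 1) * ‖u‖ := by ring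
  have hsplit : ∀ k : ℕ, (T ^ k) y = (T ^ k) u + w := by
    intro k
    have hy : y = u + w := by rw [hw]; abel
    rw [hy, map_add, hTkw]
  refine ⟨hsplit, ?_⟩
  have hub : ∀ k : ℕ, ‖(T ^ k) y - w‖ ≤ c ^ k * ‖u‖ := by
    intro k
    rw [hsplit k]
    simpa using (hTk k).2
  have hlim : Tendsto (fun k : ℕ => c ^ k * ‖u‖) atTop (𝓝 0) := by
    have := (tendsto_pow_atTop_nhds_zero_of_lt_one hc0 hc1).mul_const ‖u‖
    simpa using this
  refine squeeze_zero (fun k => norm_nonneg _) hub hlim
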